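/- (Proposition 3.2) For every real number a*, the quadratic S(n) = a*·n² + (7a* − 2)·n + (6a* − 2) is a solution of the recurrence: for every integer n ≥ 3, S(n) = S(n−1) + (2/(n−2))·S(n−3) + 2. -/
import Mathlib

/-- Proposition 3.2: for every real `a*`, the quadratic
`S n = a* n² + (7a* − 2) n + (6a* − 2)` satisfies the recurrence
`S n = S (n-1) + (2/(n-2)) * S (n-3) + 2` for all `n ≥ 3`. -/
theorem quadratic_solves_recurrence (astar : ℝ) (S : ℕ → ℝ)
    (hS : ∀ n : ℕ, S n = astar * (n : ℝ) ^ 2 + (7 * astar - 2) * (n : ℝ) + (6 * astar - 2)) :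
    ∀ n : ℕ, 3 ≤ n → S n = S (n - 1) + (2 / ((n : ℝ) - 2)) * S (n - 3) + 2 := by
  intro n hn
  obtain ⟨m, rfl⟩ : ∃ m, n = m + 3 := ⟨n - 3, by omega⟩
  have h1 : m + 3 - 1 = m + 2 := by omega
  have h3 : m + 3 - 3 = m := by omega
  rw [h1, h3, hS, hS, hS]
  have hne : ((m : ℝ) + 3) - 2 ≠ 0 := by have := Nat.cast_nonneg (α := ℝ) m; intro h; linarith
  push_cast
  field_simp
  ring
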